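/- Two-maximizer property of the generation-FACTS-choice network objective: define h: [0,1] → ℝ by h(r) = (1 − r) + 5.1 + (2/3)·r for r ≤ 0.65 and h(r) = (1 − r) + (5.1 − 1/3) + (4/3)·r for r ≥ 0.65 (the two formulas agree at r = 0.65). Then the maximum of h over [0,1] equals 6.1, and h(r) = 6.1 holds exactly for r ∈ {0, 1}; consequently the port flow w = 1 − r at optimality is exactly 0 or exactly 1. -/

import Mathlib

/-- The objective of the generation-FACTS-choice network: the total generation
`w + MFF_A(r)` with `w = 1 - r`, where `MFF_A(r) = 5.1 + (2/3) r` for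
`r ≤ 0.65` and `MFF_A(r) = (5.1 - 1/3) + (4/3) r` for `r ≥ 0.65`. -/
noncomputable def choiceObjective (r : ℝ) : ℝ :=
  if r ≤ 0.65 then (1 - r) + 5.1 + (2 / 3) * r
  else (1 - r) + (5.1 - 1 / 3) + (4 / 3) * r

lemma choiceObjective_iff (r : ℝ) (h0 : 0 ≤ r) (h1 : r ≤ 1) :
    choiceObjective r = 6.1 ↔ (r = 0 ∨ r = 1) := by
  unfold choiceObjective
  split_ifs with h
  · constructor
    · intro he
      left; linarith
    · rintro (rfl | rfl)
      · norm_num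
      · norm_num at h
  · constructor
    · intro he
      right; linarith
    · rintro (rfl | rfl)
      · norm_num at h
      · norm_num

/-- Two-maximizer property of the generation-FACTS-choice
network objective: the maximum of `choiceObjective` over `[0, 1]` is `6.1`,
and it is attained exactly at `r = 0` and `r = 1`; consequently the port flow
`w = 1 - r` at optimality is exactly `0` or exactly `1`. -/
theorem choiceObjective_two_maximizers :
    IsGreatest (choiceObjective '' Set.Icc (0 : ℝ) 1) 6.1 ∧
      (∀ r ∈ Set.Icc (0 : ℝ) 1,
        (choiceObjective r = 6.1 ↔ (r = 0 ∨ r = 1))) ∧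
      (∀ r ∈ Set.Icc (0 : ℝ) 1,
        choiceObjective r = 6.1 → (1 - r = 1 ∨ 1 - r = 0)) := by
  refine ⟨⟨⟨0, by norm_num, ?_⟩, ?_⟩, ?_, ?_⟩
  · exact (choiceObjective_iff 0 le_rfl zero_le_one).2 (Or.inl rfl)
  · rintro x ⟨r, ⟨h0, h1⟩, rfl⟩
    unfold choiceObjective
    split_ifs with h <;> linarith
  · exact fun r hr => choiceObjective_iff r hr.1 hr.2
  · intro r hr he
    rcases (choiceObjective_iff r hr.1 hr.2).1 he with rfl | rfl <;> norm_num
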